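/- Fix ρ>0. If the point (x,0,0) together with multipliers (u,v,s,t) is a KKT point of (R_ρ), then x is a KKT point of (P); specifically, x is feasible for (P) and the multipliers μ = (v−u)/ρ and λ = s/ρ satisfy λ ≥ 0, ∇f(x) − ∇h(x)μ − ∇g(x)λ = 0, and λ_i g_i(x) = 0 for all i. -/

import Mathlib

open RealInnerProductSpace

/-- If `(x,0,0)` together with multipliers `(u,v,s,t)` is a KKT
point of (R_ρ), then `x` is a KKT point of (P) with multipliers `μ = (v−u)/ρ`
and `λ = s/ρ`. -/
theorem stmt15 {n mE mI : ℕ}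
    (f : EuclideanSpace ℝ (Fin n) → ℝ)
    (h : Fin mE → EuclideanSpace ℝ (Fin n) → ℝ)
    (g : Fin mI → EuclideanSpace ℝ (Fin n) → ℝ)
    (hf : ContDiff ℝ 1 f) (hh : ∀ i, ContDiff ℝ 1 (h i)) (hg : ∀ i, ContDiff ℝ 1 (g i))
    (ρ : ℝ) (hρ : 0 < ρ)
    (x : EuclideanSpace ℝ (Fin n))
    (u v : Fin mE → ℝ) (s t : Fin mI → ℝ)
    -- (x,0,0) is feasible for (R_ρ)
    (hfeas : (∀ i, 0 ≤ (0:ℝ) - h i x) ∧ (∀ i, 0 ≤ (0:ℝ) + h i x) ∧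
      (∀ i, 0 ≤ (0:ℝ) + g i x) ∧ (∀ _i : Fin mI, (0:ℝ) ≤ 0))
    -- KKT conditions of (R_ρ) at (x,0,0) with multipliers (u,v,s,t)
    (hu : ∀ i, 0 ≤ u i) (hv : ∀ i, 0 ≤ v i) (hs : ∀ i, 0 ≤ s i) (ht : ∀ i, 0 ≤ t i)
    (hstat : ρ • gradient f x + (∑ i, (u i - v i) • gradient (h i) x)
        - (∑ i, s i • gradient (g i) x) = 0)
    (huv : ∀ i, 1 - u i - v i = 0) (hst : ∀ i, 1 - s i - t i = 0)
    (hcu : ∑ i, u i * ((0:ℝ) - h i x) = 0)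
    (hcv : ∑ i, v i * ((0:ℝ) + h i x) = 0)
    (hcs : ∑ i, s i * ((0:ℝ) + g i x) = 0)
    (hct : ∑ i, t i * (0:ℝ) = 0) :
    -- x is feasible for (P)
    ((∀ i, h i x = 0) ∧ (∀ i, 0 ≤ g i x)) ∧
    -- λ = s/ρ ≥ 0
    (∀ i, 0 ≤ s i / ρ) ∧
    -- stationarity of (P) with μ = (v−u)/ρ, λ = s/ρ
    (gradient f x - (∑ i, ((v i - u i) / ρ) • gradient (h i) x)
      - (∑ i, (s i / ρ) • gradient (g i) x) = 0) ∧
    -- complementarity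
    (∀ i, (s i / ρ) * g i x = 0) := by
  obtain ⟨h1, h2, h3, _⟩ := hfeas
  have hhx : ∀ i, h i x = 0 := fun i => le_antisymm (by linarith [h1 i]) (by linarith [h2 i])
  have hgx : ∀ i, 0 ≤ g i x := fun i => by linarith [h3 i]
  have hcomp : ∀ i, s i * g i x = 0 := by
    intro i
    have hnn : ∀ j ∈ Finset.univ, (0:ℝ) ≤ s j * ((0:ℝ) + g j x) :=
      fun j _ => mul_nonneg (hs j) (by linarith [hgx j])
    have := (Finset.sum_eq_zero_iff_of_nonneg hnn).mp hcs i (Finset.mem_univ i)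
    simpa using this
  have hstat' : gradient f x - ∑ i, ((v i - u i) / ρ) • gradient (h i) x
      - ∑ i, (s i / ρ) • gradient (g i) x = 0 := ?packed
  · exact ⟨⟨hhx, hgx⟩, fun i => div_nonneg (hs i) hρ.le, hstat',
      fun i => by rw [div_mul_eq_mul_div, hcomp i, zero_div]⟩
  case packed =>
  have key := congrArg (fun w => (ρ⁻¹ : ℝ) • w) hstat
  simp only [smul_add, smul_sub, smul_smul, Finset.smul_sum, smul_zero] at key
  have hρ' : ρ ≠ 0 := hρ.ne'
  rw [inv_mul_cancel₀ hρ', one_smul] at key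
  have : ∀ i, ρ⁻¹ * (u i - v i) = -((v i - u i) / ρ) := by
    intro i; field_simp; ring
  rw [show (∑ i, (ρ⁻¹ * (u i - v i)) • gradient (h i) x)
      = -∑ i, ((v i - u i) / ρ) • gradient (h i) x by
    rw [← Finset.sum_neg_distrib]; exact Finset.sum_congr rfl fun i _ => by
      rw [this i, neg_smul]] at key
  rw [show (∑ i, (ρ⁻¹ * s i) • gradient (g i) x)
      = ∑ i, (s i / ρ) • gradient (g i) x from
    Finset.sum_congr rfl fun i _ => by rw [div_eq_inv_mul]] at key
  rw [sub_sub, ← sub_sub]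
  linear_combination (norm := abel) key
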